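/- Let D be a triangulated category and U a cluster tilting subcategory, and let D/U be the additive quotient by morphisms factoring through U. Then any distinguished triangle x → y → z → Σx in D induces an exact sequence x̄ → ȳ → z̄ in D/U. -/

import Mathlib

open CategoryTheory Limits Pretriangulated Opposite

noncomputable section

/-- The morphisms `x ⟶ y` in a category that factor through an object of `U`. -/
def FactorsThru {D : Type*} [Category D] (U : Set D) {x y : D} (f : x ⟶ y) : Prop :=
  ∃ (u : D) (_ : u ∈ U) (g : x ⟶ u) (h : u ⟶ y), g ≫ h = f

/-- A full subcategory (given by its set of objects) is precovering. -/
def IsPrecovering {D : Type*} [Category D] (V : Set D) : Prop :=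
  ∀ x : D, ∃ (v : D) (_ : v ∈ V) (p : v ⟶ x),
    ∀ v' ∈ V, ∀ f : v' ⟶ x, ∃ g : v' ⟶ v, g ≫ p = f

/-- A full subcategory (given by its set of objects) is preenveloping. -/
def IsPreenveloping {D : Type*} [Category D] (V : Set D) : Prop :=
  ∀ x : D, ∃ (v : D) (_ : v ∈ V) (i : x ⟶ v),
    ∀ v' ∈ V, ∀ f : x ⟶ v', ∃ g : v ⟶ v', i ≫ g = f

/-- A full subcategory `V` of a triangulated category is maximal 1-orthogonal if
`v ∈ V ⇔ Hom(V, Σv) = 0 ⇔ Hom(v, ΣV) = 0`. -/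
def MaxOneOrthogonal {D : Type*} [Category D] [Preadditive D] [HasShift D ℤ] (V : Set D) : Prop :=
  (∀ x : D, x ∈ V ↔ ∀ v ∈ V, ∀ f : v ⟶ x⟦(1:ℤ)⟧, f = 0) ∧
  (∀ x : D, x ∈ V ↔ ∀ v ∈ V, ∀ f : x ⟶ v⟦(1:ℤ)⟧, f = 0)

/-- A cluster tilting subcategory is a maximal 1-orthogonal subcategory which is
precovering and preenveloping. -/
def ClusterTilting {D : Type*} [Category D] [Preadditive D] [HasShift D ℤ] (U : Set D) : Prop :=
  MaxOneOrthogonal U ∧ IsPrecovering U ∧ IsPreenveloping U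

section Aux

variable {D : Type*} [Category D] [Preadditive D] [HasZeroObject D]
  [HasShift D ℤ] [∀ (n : ℤ), (shiftFunctor D n).Additive] [Pretriangulated D]
  {U : Set D}

lemma aux_zero (hU : ClusterTilting U) {u u' : D} (hu : u ∈ U) (hu' : u' ∈ U)
    (f : u⟦(-1:ℤ)⟧ ⟶ u') : f = 0 := by
  apply (shiftFunctor D (1:ℤ)).map_injective
  have h0 : (shiftEquiv D (1:ℤ)).counitIso.inv.app u ≫ (shiftFunctor D (1:ℤ)).map f = 0 :=
    (hU.1.1 u').mp hu' u hu _
  rw [Functor.map_zero]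
  refine Eq.trans (b := (shiftEquiv D (1:ℤ)).counitIso.hom.app u ≫
        ((shiftEquiv D (1:ℤ)).counitIso.inv.app u ≫ (shiftFunctor D (1:ℤ)).map f)) ?_ ?_
  · erw [← Category.assoc, Iso.hom_inv_id_app, Category.id_comp]
    rfl
  · rw [h0]; exact comp_zero

lemma aux_factorsThru_eq_zero (hU : ClusterTilting U) {u c : D} (hu : u ∈ U)
    {f : u⟦(-1:ℤ)⟧ ⟶ c} (hf : FactorsThru U f) : f = 0 := by
  obtain ⟨u', hu', g, h, rfl⟩ := hf
  rw [aux_zero hU hu hu' g, zero_comp]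

lemma aux_cover (hU : ClusterTilting U) (d : D) :
    ∃ (u : D) (_ : u ∈ U) (p : u⟦(-1:ℤ)⟧ ⟶ d),
      ∀ {c : D} (ψ : d ⟶ c), FactorsThru U (p ≫ ψ) → FactorsThru U ψ := by
  obtain ⟨u, hu, q, hq⟩ := hU.2.1 (d⟦(1:ℤ)⟧)
  obtain ⟨W, s, m, hTq⟩ := Pretriangulated.distinguished_cocone_triangle q
  have hqs : q ≫ s = 0 := Pretriangulated.comp_distTriang_mor_zero₁₂ _ hTq
  have hWv : ∀ v ∈ U, ∀ t : v ⟶ W, t = 0 := by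
    intro v hv t
    obtain ⟨t₁, ht₁⟩ := Triangle.coyoneda_exact₃ _ hTq t ((hU.1.1 u).mp hu v hv (t ≫ m))
    obtain ⟨t₂, ht₂⟩ := hq v hv t₁
    rw [ht₁, ← ht₂]
    erw [Category.assoc]
    change t₂ ≫ q ≫ s = 0
    rw [hqs, comp_zero]
  set E := shiftEquiv D (1:ℤ) with hE
  have hWU : W⟦(-1:ℤ)⟧ ∈ U := by
    refine (hU.1.1 _).mpr (fun v hv f => ?_)
    have h0 : f ≫ E.counitIso.hom.app W = 0 := hWv v hv _
    refine Eq.trans (b := (f ≫ E.counitIso.hom.app W) ≫ E.counitIso.inv.app W) ?_ ?_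
    · erw [Category.assoc, Iso.hom_inv_id_app]
      exact (Category.comp_id f).symm
    · rw [h0]; exact zero_comp
  refine ⟨u, hu, E.inverse.map q ≫ E.unitIso.inv.app d, fun {c} ψ hψ => ?_⟩
  have hzero : (E.inverse.map q ≫ E.unitIso.inv.app d) ≫ ψ = 0 :=
    aux_factorsThru_eq_zero hU hu hψ
  have hnat' : E.inverse.map (E.functor.map ψ) =
      E.unitIso.inv.app d ≫ ψ ≫ E.unitIso.hom.app c := by
    have h := E.unitIso.hom.naturality ψ
    simp only [Functor.id_map, Functor.comp_map] at h
    rw [h, ← Category.assoc, Iso.inv_hom_id_app]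
    exact (Category.id_comp _).symm
  have h3 : q ≫ E.functor.map ψ = 0 := by
    apply E.inverse.map_injective
    erw [Functor.map_comp]
    erw [hnat']
    rw [Functor.map_zero]
    calc E.inverse.map q ≫ E.unitIso.inv.app d ≫ ψ ≫ E.unitIso.hom.app c
        = ((E.inverse.map q ≫ E.unitIso.inv.app d) ≫ ψ) ≫ E.unitIso.hom.app c := by
          simp only [Category.assoc]
          exact (Category.assoc _ _ _).symm
      _ = 0 := by rw [hzero, zero_comp]
  obtain ⟨χ, hχ⟩ := Triangle.yoneda_exact₂ _ hTq (E.functor.map ψ) h3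
  refine ⟨W⟦(-1:ℤ)⟧, hWU, E.unitIso.hom.app d ≫ E.inverse.map s,
    E.inverse.map χ ≫ E.unitIso.inv.app c, ?_⟩
  have h4 : E.unitIso.inv.app d ≫ ψ ≫ E.unitIso.hom.app c =
      E.inverse.map s ≫ E.inverse.map χ := by
    rw [← hnat', hχ]
    erw [Functor.map_comp]
    rfl
  calc (E.unitIso.hom.app d ≫ E.inverse.map s) ≫ E.inverse.map χ ≫ E.unitIso.inv.app c
      = E.unitIso.hom.app d ≫ (E.inverse.map s ≫ E.inverse.map χ) ≫ E.unitIso.inv.app c := by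
        simp only [Category.assoc]
    _ = E.unitIso.hom.app d ≫ (E.unitIso.inv.app d ≫ ψ ≫ E.unitIso.hom.app c) ≫
          E.unitIso.inv.app c := by rw [h4]; rfl
    _ = ψ := by
        rw [Category.assoc, Category.assoc, Iso.hom_inv_id_app, ← Category.assoc,
          ← Category.assoc, Iso.hom_inv_id_app, Category.id_comp]
        exact Category.comp_id ψ

end Aux

/-- Let `D` be a triangulated category (skeletally small, `k`-linear with finite dimensional
Hom spaces, with a Serre functor `S`) and `U` a cluster tilting subcategory, and let
`π : D ⥤ A` be the projection onto the abelian quotient `D/U` (a full, essentially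
surjective additive functor killing exactly the morphisms factoring through `U`).
Then any distinguished triangle `x → y → z → Σx` in `D` induces an exact sequence
`x̄ → ȳ → z̄` in `D/U`. -/
theorem stmt6 {k : Type*} [Field k]
    {D : Type*} [Category D] [Preadditive D] [Linear k D] [HasZeroObject D]
    [HasShift D ℤ] [∀ (n : ℤ), (shiftFunctor D n).Additive] [Pretriangulated D]
    [∀ x y : D, FiniteDimensional k (x ⟶ y)]
    (S : D ⥤ D) [S.IsEquivalence]
    (hSerre : ∀ a b : D, Nonempty ((a ⟶ b) ≃ₗ[k] Module.Dual k (b ⟶ S.obj a)))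
    (U : Set D) (hU : ClusterTilting U)
    {A : Type*} [Category A] [Abelian A]
    (π : D ⥤ A) [π.Full] [π.EssSurj] [π.Additive]
    (hπ : ∀ ⦃x y : D⦄ (f : x ⟶ y), π.map f = 0 ↔ FactorsThru U f)
    (T : Triangle D) (hT : T ∈ distTriang D) :
    (ShortComplex.mk (π.map T.mor₁) (π.map T.mor₂)
      (by rw [← π.map_comp, comp_distTriang_mor_zero₁₂ _ hT, π.map_zero])).Exact := by
  let S' : ShortComplex A := ShortComplex.mk (π.map T.mor₁) (π.map T.mor₂)
    (by rw [← π.map_comp, comp_distTriang_mor_zero₁₂ _ hT, π.map_zero])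
  suffices h : S'.Exact by exact h
  rw [ShortComplex.exact_iff_epi_toCycles]
  have hgS : S'.iCycles ≫ π.map T.mor₂ = 0 := S'.iCycles_g
  have hti : S'.toCycles ≫ S'.iCycles = π.map T.mor₁ := S'.toCycles_i
  let iso : π.obj (π.objPreimage S'.cycles) ≅ S'.cycles := π.objObjPreimageIso S'.cycles
  obtain ⟨u, hu, p, hp⟩ := aux_cover hU (π.objPreimage S'.cycles)
  have hepi : Epi (π.map p) := by
    apply Preadditive.epi_of_cancel_zero
    intro R t ht
    obtain ⟨ψ, hψ⟩ := π.map_surjective (t ≫ (π.objObjPreimageIso R).inv)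
    have h1 : FactorsThru U (p ≫ ψ) := by
      rw [← hπ, π.map_comp, hψ, ← Category.assoc, ht, zero_comp]
    have h2 : π.map ψ = 0 := (hπ ψ).mpr (hp ψ h1)
    have h3 : t ≫ (π.objObjPreimageIso R).inv = 0 := by rw [← hψ]; exact h2
    calc t = (t ≫ (π.objObjPreimageIso R).inv) ≫ (π.objObjPreimageIso R).hom := by
          rw [Category.assoc, Iso.inv_hom_id, Category.comp_id]
      _ = 0 := by rw [h3, zero_comp]
  haveI := hepi
  haveI : Epi (π.map p ≫ iso.hom) := epi_comp _ _
  obtain ⟨ψ0, hψ0⟩ := π.map_surjective ((π.map p ≫ iso.hom) ≫ S'.iCycles)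
  have hg0 : ψ0 ≫ T.mor₂ = 0 := by
    apply aux_factorsThru_eq_zero hU hu
    rw [← hπ, π.map_comp, hψ0, Category.assoc, hgS, comp_zero]
  obtain ⟨n, hn⟩ := Triangle.coyoneda_exact₂ _ hT ψ0 hg0
  have hfac : π.map p ≫ iso.hom = π.map n ≫ S'.toCycles := by
    have heq : (π.map p ≫ iso.hom) ≫ S'.iCycles = (π.map n ≫ S'.toCycles) ≫ S'.iCycles := by
      rw [Category.assoc (π.map n), hti, ← hψ0, hn, π.map_comp]
    exact (cancel_mono S'.iCycles).mp heq
  haveI : Epi (π.map n ≫ S'.toCycles) := by rw [← hfac]; infer_instance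
  exact epi_of_epi (π.map n) S'.toCycles
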